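/- Let M be a Cartesian cohomology functor for (G, Σ) with coefficients in A. Let K' ⊆ K be compact subgroups of G with [K : K'] finite, and suppose K is contained in some open compact subgroup of G contained in Σ. Then there is a unique A-linear map pr^⋆ : M_Iw(K) → M_Iw(K') with the following property: for every pair of open compact subgroups V' ⊆ V ⊆ Σ with K ⊆ V, K' ⊆ V', V' ∩ K = K' and [V : V'] = [K : K'], the composite of pr^⋆ with the canonical projection M_Iw(K') → M(V') equals the composite of the canonical projection M_Iw(K) → M(V) with the pullback pr^⋆_{V',V} : M(V) → M(V'). -/

import Mathlib

/-- The conjugate subgroup `γ U γ⁻¹`. -/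
def conjSub {G : Type*} [Group G] (γ : G) (U : Subgroup G) : Subgroup G :=
  U.map (MulAut.conj γ).toMonoidHom

/-- A *cohomology functor* for a group `G`, with objects the subgroups satisfying the
predicate `P` (in practice: the open compact subgroups contained in an open submonoid `Σ`),
monoid of admissible twists `S` (in practice `Σ`), and coefficients in a commutative
ring `A`.  It consists of `A`-modules `M U`, contravariant pullback maps
`pull g U V : M V →ₗ M U` (for the morphism `[g] : U → V` of `𝒫(G, Σ)`, i.e. `g ∈ S` and
`g⁻¹ U g ⊆ V`) and covariant pushforward maps `push g U V : M U →ₗ M V` (for the morphism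
`[g] : U → V` of `𝒫(G, Σ⁻¹)`, i.e. `g⁻¹ ∈ S` and `g⁻¹ U g ⊆ V`), which are functorial,
depend only on the double coset `U g V`, and satisfy `[g]^⋆ = [g⁻¹]_⋆` when
`g⁻¹ U g = V`. -/
structure CohFunctor (G : Type*) [Group G] (P : Subgroup G → Prop) (S : Set G)
    (A : Type*) [CommRing A] where
  M : Subgroup G → Type*
  addCommGroup : ∀ U, AddCommGroup (M U)
  module : ∀ U, Module A (M U)
  pull : ∀ (g : G) (U V : Subgroup G), M V →ₗ[A] M U
  push : ∀ (g : G) (U V : Subgroup G), M U →ₗ[A] M V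
  pull_id : ∀ U, P U → pull 1 U U = LinearMap.id
  push_id : ∀ U, P U → push 1 U U = LinearMap.id
  pull_comp : ∀ (g h : G) (U V W : Subgroup G), P U → P V → P W →
    g ∈ S → h ∈ S → (∀ x ∈ U, g⁻¹ * x * g ∈ V) → (∀ x ∈ V, h⁻¹ * x * h ∈ W) →
    (pull g U V).comp (pull h V W) = pull (g * h) U W
  push_comp : ∀ (g h : G) (U V W : Subgroup G), P U → P V → P W →
    g⁻¹ ∈ S → h⁻¹ ∈ S → (∀ x ∈ U, g⁻¹ * x * g ∈ V) → (∀ x ∈ V, h⁻¹ * x * h ∈ W) →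
    (push h V W).comp (push g U V) = push (g * h) U W
  pull_congr : ∀ (g u v : G) (U V : Subgroup G), P U → P V → g ∈ S →
    (∀ x ∈ U, g⁻¹ * x * g ∈ V) → u ∈ U → v ∈ V → pull (u * g * v) U V = pull g U V
  push_congr : ∀ (g u v : G) (U V : Subgroup G), P U → P V → g⁻¹ ∈ S →
    (∀ x ∈ U, g⁻¹ * x * g ∈ V) → u ∈ U → v ∈ V → push (u * g * v) U V = push g U V
  pull_eq_push : ∀ (g : G) (U V : Subgroup G), P U → P V → g ∈ S →
    conjSub g⁻¹ U = V → pull g U V = push g⁻¹ V U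

attribute [instance] CohFunctor.addCommGroup CohFunctor.module

namespace CohFunctor

variable {G : Type*} [Group G] {P : Subgroup G → Prop} {S : Set G}
  {A : Type*} [CommRing A]

/-- The Cartesian (Mackey) condition: for objects `U, U' ≤ V` and any finite set `R` of
representatives of the double cosets `U\V/U'`, the composite `pr^⋆_{U,V} ∘ pr_{U',V,⋆}`
equals the sum over `γ ∈ R` of `pr_{U_γ,U,⋆} ∘ [γ]^⋆` with `U_γ = γU'γ⁻¹ ∩ U`. -/
def IsCartesian (F : CohFunctor G P S A) : Prop :=
  ∀ (U U' V : Subgroup G), P U → P U' → P V → U ≤ V → U' ≤ V →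
    ∀ R : Finset G, (↑R : Set G) ⊆ (V : Set G) →
      (∀ v ∈ V, ∃ γ ∈ R, ∃ x ∈ U, ∃ y ∈ U', v = x * γ * y) →
      (∀ γ ∈ R, ∀ γ' ∈ R, (∃ x ∈ U, ∃ y ∈ U', γ' = x * γ * y) → γ = γ') →
      (F.pull 1 U V).comp (F.push 1 U' V) =
        ∑ γ ∈ R, (F.push 1 (conjSub γ U' ⊓ U) U).comp (F.pull γ (conjSub γ U' ⊓ U) U')

/-- The Iwasawa completion `M_Iw(K) = lim_U M(U)`, the inverse limit over the objects `U`
containing the compact subgroup `K`, with respect to the pushforward maps `pr_⋆`. -/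
def Iw (F : CohFunctor G P S A) (K : Subgroup G) :
    Submodule A (∀ U : {U : Subgroup G // P U ∧ K ≤ U}, F.M U.1) where
  carrier := {f | ∀ (U V : {U : Subgroup G // P U ∧ K ≤ U}), U.1 ≤ V.1 →
      F.push 1 U.1 V.1 (f U) = f V}
  add_mem' := by
    intro f g hf hg U V h
    simp only [Pi.add_apply, map_add, hf U V h, hg U V h]
  zero_mem' := by
    intro U V h
    simp
  smul_mem' := by
    intro c f hf U V h
    simp only [Pi.smul_apply, map_smul, hf U V h]

/-- Projection from the Iwasawa completion at `K` to the value at an object `U ⊇ K`. -/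
def IwProj (F : CohFunctor G P S A) (K U : Subgroup G) (hU : P U) (hKU : K ≤ U) :
    F.Iw K →ₗ[A] F.M U :=
  (LinearMap.proj (⟨U, hU, hKU⟩ : {U : Subgroup G // P U ∧ K ≤ U})).comp (F.Iw K).subtype

/-- The pushforward `pr_⋆ : M_Iw(K₁) → M_Iw(K₂)` on Iwasawa completions, for compact
subgroups `K₁ ≤ K₂` (restriction of compatible families). -/
def IwRes (F : CohFunctor G P S A) (K₁ K₂ : Subgroup G) (h : K₁ ≤ K₂) :
    F.Iw K₁ →ₗ[A] F.Iw K₂ where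
  toFun f := ⟨fun U => f.1 ⟨U.1, U.2.1, le_trans h U.2.2⟩, fun U V hUV =>
    f.2 ⟨U.1, U.2.1, le_trans h U.2.2⟩ ⟨V.1, V.2.1, le_trans h V.2.2⟩ hUV⟩
  map_add' f g := rfl
  map_smul' c f := rfl

end CohFunctor

namespace Stmt1Aux

open scoped Pointwise

section GroupLemmas

variable {G : Type*} [Group G]

theorem mem_conjSub {g x : G} {U : Subgroup G} : x ∈ conjSub g U ↔ g⁻¹ * x * g ∈ U := by
  simp only [conjSub, Subgroup.mem_map, MulEquiv.coe_toMonoidHom, MulAut.conj_apply]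
  constructor
  · rintro ⟨y, hy, rfl⟩
    have : g⁻¹ * (g * y * g⁻¹) * g = y := by group
    rwa [this]
  · intro h
    exact ⟨g⁻¹ * x * g, h, by group⟩

theorem conjSub_one (U : Subgroup G) : conjSub 1 U = U := by
  ext x; simp [mem_conjSub]

theorem conjSub_mul (a b : G) (U : Subgroup G) :
    conjSub (a * b) U = conjSub a (conjSub b U) := by
  ext x
  rw [mem_conjSub, mem_conjSub, mem_conjSub]
  have : b⁻¹ * (a⁻¹ * x * a) * b = (a * b)⁻¹ * x * (a * b) := by group
  rw [this]

theorem conjSub_self {n : G} {U : Subgroup G} (h : n ∈ U) : conjSub n U = U := by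
  ext x
  rw [mem_conjSub]
  constructor
  · intro h2
    have e : x = n * (n⁻¹ * x * n) * n⁻¹ := by group
    rw [e]
    exact mul_mem (mul_mem h h2) (inv_mem h)
  · intro h2
    exact mul_mem (mul_mem (inv_mem h) h2) h

theorem coe_conjSub (g : G) (U : Subgroup G) :
    (conjSub g U : Set G) = (fun x => g⁻¹ * x * g) ⁻¹' (U : Set G) :=
  Set.ext fun _ => mem_conjSub

/-- The product `K * N` of two subgroups, where `K` normalizes `N`, as a subgroup. -/
def prodSub (K N : Subgroup G) (h : ∀ k ∈ K, conjSub k N = N) : Subgroup G where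
  carrier := (K : Set G) * (N : Set G)
  one_mem' := ⟨1, K.one_mem, 1, N.one_mem, one_mul 1⟩
  mul_mem' := by
    rintro a b ⟨k1, hk1, n1, hn1, rfl⟩ ⟨k2, hk2, n2, hn2, rfl⟩
    refine ⟨k1 * k2, mul_mem hk1 hk2, (k2⁻¹ * n1 * k2) * n2, mul_mem ?_ hn2, by group⟩
    rw [← h k2⁻¹ (inv_mem hk2)]
    refine mem_conjSub.mpr ?_
    have e : (k2⁻¹)⁻¹ * (k2⁻¹ * n1 * k2) * k2⁻¹ = n1 := by group
    rwa [e]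
  inv_mem' := by
    rintro a ⟨k, hk, n, hn, rfl⟩
    refine ⟨k⁻¹, inv_mem hk, k * n⁻¹ * k⁻¹, ?_, by group⟩
    rw [← h k hk]
    refine mem_conjSub.mpr ?_
    have e : k⁻¹ * (k * n⁻¹ * k⁻¹) * k = n⁻¹ := by group
    rw [e]
    exact inv_mem hn

theorem mem_prodSub {K N : Subgroup G} {h} {x : G} :
    x ∈ prodSub K N h ↔ ∃ k ∈ K, ∃ n ∈ N, k * n = x := Iff.rfl

theorem coe_prodSub {K N : Subgroup G} {h} :
    (prodSub K N h : Set G) = (K : Set G) * (N : Set G) := rfl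

theorem left_le_prodSub {K N : Subgroup G} {h} : K ≤ prodSub K N h :=
  fun k hk => ⟨k, hk, 1, N.one_mem, mul_one k⟩

theorem right_le_prodSub {K N : Subgroup G} {h} : N ≤ prodSub K N h :=
  fun n hn => ⟨1, K.one_mem, n, hn, one_mul n⟩

theorem prodSub_le {K N H : Subgroup G} {h} (h1 : K ≤ H) (h2 : N ≤ H) :
    prodSub K N h ≤ H := by
  rintro x ⟨k, hk, n, hn, rfl⟩
  exact mul_mem (h1 hk) (h2 hn)

/-- The comparison map between quotients and the resulting index lemmas. -/
theorem relindex_lemma (K K' V V' : Subgroup G)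
    (hKV : K ≤ V) (hK'V' : K' ≤ V') (hint : V' ⊓ K = K') :
    ((∀ v ∈ V, ∃ k ∈ K, ∃ w ∈ V', v = k * w) → V'.relIndex V = K'.relIndex K)
    ∧ (V'.relIndex V = K'.relIndex K → K'.relIndex K ≠ 0 →
        ∀ v ∈ V, ∃ k ∈ K, ∃ w ∈ V', v = k * w) := by
  classical
  let ψ : K ⧸ K'.subgroupOf K → V ⧸ V'.subgroupOf V :=
    Quotient.map' (fun k => Subgroup.inclusion hKV k) (by
      intro a b hab
      rw [QuotientGroup.leftRel_apply] at hab ⊢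
      rw [Subgroup.mem_subgroupOf] at hab ⊢
      simp only [Subgroup.coe_mul, Subgroup.coe_inv, Subgroup.coe_inclusion]
      exact hK'V' hab)
  have hψ_mk : ∀ a : K, ψ (Quotient.mk'' a) = Quotient.mk'' (Subgroup.inclusion hKV a) :=
    fun a => rfl
  have hinj : Function.Injective ψ := by
    intro a b
    refine Quotient.inductionOn₂' a b fun a b h => ?_
    rw [hψ_mk, hψ_mk, Quotient.eq''] at h
    rw [QuotientGroup.leftRel_apply, Subgroup.mem_subgroupOf] at h
    rw [Quotient.eq'', QuotientGroup.leftRel_apply, Subgroup.mem_subgroupOf]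
    simp only [Subgroup.coe_mul, Subgroup.coe_inv, Subgroup.coe_inclusion] at h
    have hKmem : (↑a)⁻¹ * (↑b : G) ∈ K := mul_mem (inv_mem a.2) b.2
    have : (↑a)⁻¹ * (↑b : G) ∈ K' := hint ▸ Subgroup.mem_inf.mpr ⟨h, hKmem⟩
    simpa using this
  have hcard1 : V'.relIndex V = Nat.card (V ⧸ V'.subgroupOf V) := rfl
  have hcard2 : K'.relIndex K = Nat.card (K ⧸ K'.subgroupOf K) := rfl
  constructor
  · intro hsurj
    have hψsurj : Function.Surjective ψ := by
      intro q
      refine Quotient.inductionOn' q fun v => ?_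
      obtain ⟨k, hk, w, hw, heq⟩ := hsurj (v : G) v.2
      refine ⟨Quotient.mk'' ⟨k, hk⟩, ?_⟩
      rw [hψ_mk, Quotient.eq'', QuotientGroup.leftRel_apply, Subgroup.mem_subgroupOf]
      simp only [Subgroup.coe_mul, Subgroup.coe_inv, Subgroup.coe_inclusion]
      have : k⁻¹ * (v : G) = w := by rw [heq]; group
      rw [this]; exact hw
    rw [hcard1, hcard2]
    exact (Nat.card_eq_of_bijective ψ ⟨hinj, hψsurj⟩).symm
  · intro hidx hfin v hv
    have hfinK : Finite (K ⧸ K'.subgroupOf K) := by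
      rw [hcard2] at hfin
      exact (Nat.card_ne_zero.mp hfin).2
    have hfinV : Finite (V ⧸ V'.subgroupOf V) := by
      have h0 : V'.relIndex V ≠ 0 := by rw [hidx]; exact hfin
      rw [hcard1] at h0
      exact (Nat.card_ne_zero.mp h0).2
    have hψsurj : Function.Surjective ψ := by
      have hbij : Function.Bijective ψ := by
        refine (Nat.bijective_iff_injective_and_card ψ).mpr ⟨hinj, ?_⟩
        rw [← hcard2, ← hcard1, hidx]
      exact hbij.2
    obtain ⟨q, hq⟩ := hψsurj (Quotient.mk'' ⟨v, hv⟩)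
    revert hq
    refine Quotient.inductionOn' q fun k hq => ?_
    rw [hψ_mk, Quotient.eq'', QuotientGroup.leftRel_apply, Subgroup.mem_subgroupOf] at hq
    simp only [Subgroup.coe_mul, Subgroup.coe_inv, Subgroup.coe_inclusion] at hq
    exact ⟨(k : G), k.2, (↑k)⁻¹ * v, hq, by group⟩

end GroupLemmas

end Stmt1Aux
namespace Stmt1Aux

open scoped Pointwise

section TopoLemmas

variable {G : Type*} [Group G] [TopologicalSpace G] [IsTopologicalGroup G]

theorem isOpen_conjSub {g : G} {U : Subgroup G} (h : IsOpen (U : Set G)) :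
    IsOpen (conjSub g U : Set G) := by
  rw [coe_conjSub]
  exact h.preimage ((continuous_mul_left g⁻¹).mul continuous_const)

theorem isClosed_conjSub {g : G} {U : Subgroup G} (h : IsClosed (U : Set G)) :
    IsClosed (conjSub g U : Set G) := by
  rw [coe_conjSub]
  exact h.preimage ((continuous_mul_left g⁻¹).mul continuous_const)

/-- Inside a profinite open compact subgroup, arbitrarily small open compact subgroups
exist. -/
theorem exists_small_subgroup [T2Space G] [TotallyDisconnectedSpace G]
    (U₀ : Subgroup G) (hO : IsOpen (U₀ : Set G)) (hC : IsCompact (U₀ : Set G))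
    {Ω : Set G} (hΩ : IsOpen Ω) (h1 : (1 : G) ∈ Ω) :
    ∃ N : Subgroup G, IsOpen (N : Set G) ∧ IsCompact (N : Set G) ∧ N ≤ U₀ ∧
      (N : Set G) ⊆ Ω := by
  haveI : CompactSpace ↥U₀ := isCompact_iff_compactSpace.mp hC
  obtain ⟨W, hWclopen, h1W, hWsub⟩ :=
    compact_exists_isClopen_in_isOpen (x := (1 : ↥U₀)) (U := Subtype.val ⁻¹' Ω)
      (hΩ.preimage continuous_subtype_val) h1
  obtain ⟨H, hH⟩ := IsTopologicalGroup.exist_openSubgroup_sub_clopen_nhds_of_one hWclopen h1W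
  refine ⟨(H : Subgroup ↥U₀).map U₀.subtype, ?_, ?_, ?_, ?_⟩
  · have : ((H : Subgroup ↥U₀).map U₀.subtype : Set G) = Subtype.val '' (H : Set ↥U₀) := by
      rw [Subgroup.coe_map, Subgroup.coe_subtype]; rfl
    rw [this]
    exact hO.isOpenEmbedding_subtypeVal.isOpenMap _ H.isOpen
  · have : ((H : Subgroup ↥U₀).map U₀.subtype : Set G) = Subtype.val '' (H : Set ↥U₀) := by
      rw [Subgroup.coe_map, Subgroup.coe_subtype]; rfl
    rw [this]
    exact (H.isClosed.isCompact).image continuous_subtype_val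
  · exact Subgroup.map_subtype_le _
  · intro x hx
    obtain ⟨y, hy, rfl⟩ := hx
    exact hWsub (hH hy)

/-- A compact subgroup `K'` of finite relative index in a compact subgroup `K` is open in
`K`: there is an open subset `O` of `G` with `O ∩ K = K'`. -/
theorem exists_open_inter [T2Space G] (K K' : Subgroup G)
    (hK'c : IsCompact (K' : Set G)) (hle : K' ≤ K) (hfin : K'.relIndex K ≠ 0) :
    ∃ O : Set G, IsOpen O ∧ O ∩ (K : Set G) = (K' : Set G) := by
  haveI : (K'.subgroupOf K).FiniteIndex := ⟨hfin⟩
  have hclosed : IsClosed ((K'.subgroupOf K : Set ↥K)) := by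
    have he : (K'.subgroupOf K : Set ↥K) = Subtype.val ⁻¹' (K' : Set G) := by
      rw [Subgroup.subgroupOf, Subgroup.coe_comap, Subgroup.coe_subtype]
    rw [he]
    exact hK'c.isClosed.preimage continuous_subtype_val
  have hopen := Subgroup.isOpen_of_isClosed_of_finiteIndex _ hclosed
  rw [isOpen_induced_iff] at hopen
  obtain ⟨O, hO, hOeq⟩ := hopen
  refine ⟨O, hO, ?_⟩
  ext x
  constructor
  · rintro ⟨hxO, hxK⟩
    have : (⟨x, hxK⟩ : ↥K) ∈ Subtype.val ⁻¹' O := hxO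
    rw [hOeq] at this
    exact Subgroup.mem_subgroupOf.mp this
  · intro hx
    have hxK : x ∈ K := hle hx
    have hmem : (⟨x, hxK⟩ : ↥K) ∈ Subtype.val ⁻¹' O := by
      rw [hOeq]; exact Subgroup.mem_subgroupOf.mpr hx
    exact ⟨hmem, hxK⟩

/-- Shrinking an open compact subgroup to one stable under conjugation by a compact
subgroup `K`. -/
theorem exists_conj_stable_subgroup [T2Space G] (K N₀ : Subgroup G)
    (hKc : IsCompact (K : Set G)) (hN₀o : IsOpen (N₀ : Set G))
    (hN₀c : IsCompact (N₀ : Set G)) :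
    ∃ N : Subgroup G, IsOpen (N : Set G) ∧ IsCompact (N : Set G) ∧ N ≤ N₀ ∧
      ∀ k ∈ K, conjSub k N = N := by
  obtain ⟨t, ht⟩ := hKc.elim_finite_subcover (fun k : ↥K => ((k : G) • (N₀ : Set G)))
    (fun k => hN₀o.smul _)
    (fun x hx => Set.mem_iUnion.mpr ⟨⟨x, hx⟩, by
      rw [Set.mem_smul_set_iff_inv_smul_mem]
      simp only [smul_eq_mul, inv_mul_cancel, SetLike.mem_coe]
      exact N₀.one_mem⟩)
  set N : Subgroup G := ⨅ k : ↥K, conjSub (k : G) N₀ with hN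
  have hNle : ∀ k : ↥K, N ≤ conjSub (k : G) N₀ := fun k => iInf_le _ k
  have hNN₀ : N ≤ N₀ := by
    have := hNle ⟨1, K.one_mem⟩
    rwa [conjSub_one] at this
  have hset : (N : Set G) = (N₀ : Set G) ∩ ⋂ k ∈ t, (conjSub (k : G) N₀ : Set G) := by
    apply Set.Subset.antisymm
    · intro x hx
      exact ⟨hNN₀ hx, Set.mem_biInter fun k _ => hNle k hx⟩
    · rintro x ⟨hx0, hx⟩
      rw [SetLike.mem_coe, hN, Subgroup.mem_iInf]
      intro k
      obtain ⟨i, hit, hki⟩ := Set.mem_iUnion₂.mp (ht k.2)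
      obtain ⟨n, hn, hkn⟩ := Set.mem_smul_set.mp hki
      have he : conjSub (k : G) N₀ = conjSub (i : G) N₀ := by
        rw [← hkn, smul_eq_mul, conjSub_mul, conjSub_self hn]
      rw [he]
      exact Set.mem_iInter₂.mp hx i hit
  have hNopen : IsOpen (N : Set G) := by
    rw [hset]
    exact hN₀o.inter (isOpen_biInter_finset fun i _ => isOpen_conjSub hN₀o)
  have hNclosed : IsClosed (N : Set G) := by
    have : (N : Set G) = ⋂ k : ↥K, (conjSub (k : G) N₀ : Set G) := by
      rw [hN, Subgroup.coe_iInf]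
    rw [this]
    exact isClosed_iInter fun k => isClosed_conjSub hN₀c.isClosed
  have hNcompact : IsCompact (N : Set G) :=
    hN₀c.of_isClosed_subset hNclosed hNN₀
  refine ⟨N, hNopen, hNcompact, hNN₀, ?_⟩
  intro k hk
  apply SetLike.ext
  intro x
  rw [mem_conjSub]
  simp only [hN, Subgroup.mem_iInf]
  constructor
  · intro h j
    have h2 := h ⟨k⁻¹ * (j : G), mul_mem (inv_mem hk) j.2⟩
    rw [mem_conjSub] at h2 ⊢
    have e : (↑j)⁻¹ * x * (↑j : G) =
        (k⁻¹ * ↑j)⁻¹ * (k⁻¹ * x * k) * (k⁻¹ * (↑j : G)) := by group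
    rw [e]
    exact h2
  · intro h j
    have h2 := h ⟨k * (j : G), mul_mem hk j.2⟩
    rw [mem_conjSub] at h2 ⊢
    have e : (↑j)⁻¹ * (k⁻¹ * x * k) * (↑j : G) =
        (k * ↑j)⁻¹ * x * (k * (↑j : G)) := by group
    rw [e]
    exact h2

end TopoLemmas

end Stmt1Aux
namespace Stmt1Aux

/-- A *good pair* `(V, V')` for the compact pair `K' ≤ K`. -/
structure Good {G : Type*} [Group G] (P : Subgroup G → Prop) (K K' V V' : Subgroup G) :
    Prop where
  hPV : P V
  hPV' : P V'
  hKV : K ≤ V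
  hK'V' : K' ≤ V'
  hV'V : V' ≤ V
  hinter : V' ⊓ K = K'
  hidx : V'.relIndex V = K'.relIndex K

section Alg

variable {G : Type*} [Group G] {P : Subgroup G → Prop} {S : Set G}
  {A : Type*} [CommRing A]

theorem good_relindex {K K' V V' : Subgroup G}
    (hsurj : ∀ v ∈ V, ∃ k ∈ K, ∃ w ∈ V', v = k * w)
    (hKV : K ≤ V) (hK'V' : K' ≤ V') (hint : V' ⊓ K = K') :
    V'.relIndex V = K'.relIndex K :=
  (relindex_lemma K K' V V' hKV hK'V' hint).1 hsurj

theorem good_surj {K K' V V' : Subgroup G} (hfin : K'.relIndex K ≠ 0)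
    (h : Good P K K' V V') : ∀ v ∈ V, ∃ k ∈ K, ∃ w ∈ V', v = k * w :=
  (relindex_lemma K K' V V' h.hKV h.hK'V' h.hinter).2 h.hidx hfin

/-- The key comparison lemma: for nested good pairs, pulling back from the larger pair
agrees with pulling back from the smaller pair and pushing forward. -/
theorem lemC (F : CohFunctor G P S A) (hF : F.IsCartesian) (hS1 : (1 : G) ∈ S)
    (K K' : Subgroup G) (hfin : K'.relIndex K ≠ 0)
    (V V' W W' : Subgroup G) (h1 : Good P K K' V V') (h2 : Good P K K' W W')
    (hWV : W ≤ V) (hW'V' : W' ≤ V') (f : F.Iw K) :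
    F.pull 1 V' V (f.1 ⟨V, h1.hPV, h1.hKV⟩) =
      F.push 1 W' V' (F.pull 1 W' W (f.1 ⟨W, h2.hPV, h2.hKV⟩)) := by
  have hsurj1 := good_surj hfin h1
  have hsurj2 := good_surj hfin h2
  have hWW' : W ⊓ V' = W' := by
    apply le_antisymm
    · intro x hx
      obtain ⟨hxW, hxV'⟩ := Subgroup.mem_inf.mp hx
      obtain ⟨k, hk, w, hw, heq⟩ := hsurj2 x hxW
      have hkV' : k ∈ V' := by
        have e : k = x * w⁻¹ := by rw [heq]; group
        rw [e]
        exact mul_mem hxV' (inv_mem (hW'V' hw))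
      have hkK' : k ∈ K' := h1.hinter ▸ Subgroup.mem_inf.mpr ⟨hkV', hk⟩
      rw [heq]
      exact mul_mem (h2.hK'V' hkK') hw
    · exact le_inf h2.hV'V hW'V'
  have hsub : (↑({1} : Finset G) : Set G) ⊆ (V : Set G) := by
    intro γ hγ
    simp only [Finset.coe_singleton, Set.mem_singleton_iff] at hγ
    rw [hγ]
    exact SetLike.mem_coe.mpr V.one_mem
  have hcov : ∀ v ∈ V, ∃ γ ∈ ({1} : Finset G), ∃ x ∈ V', ∃ y ∈ W, v = x * γ * y := by
    intro v hv
    obtain ⟨k, hk, w, hw, heq⟩ := hsurj1 v⁻¹ (inv_mem hv)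
    have hv' : v = (k * w)⁻¹ := by rw [← heq, inv_inv]
    exact ⟨1, Finset.mem_singleton_self 1, w⁻¹, inv_mem hw, k⁻¹, h2.hKV (inv_mem hk),
      by rw [hv']; group⟩
  have huq : ∀ γ ∈ ({1} : Finset G), ∀ γ' ∈ ({1} : Finset G),
      (∃ x ∈ V', ∃ y ∈ W, γ' = x * γ * y) → γ = γ' := by
    intro γ hγ γ' hγ' _
    rw [Finset.mem_singleton] at hγ hγ'
    rw [hγ, hγ']
  have hcart := hF V' W V h1.hPV' h2.hPV h1.hPV h1.hV'V hWV {1} hsub hcov huq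
  rw [Finset.sum_singleton, conjSub_one, hWW'] at hcart
  have hfV : f.1 ⟨V, h1.hPV, h1.hKV⟩ = F.push 1 W V (f.1 ⟨W, h2.hPV, h2.hKV⟩) :=
    (f.2 ⟨W, h2.hPV, h2.hKV⟩ ⟨V, h1.hPV, h1.hKV⟩ hWV).symm
  rw [hfV]
  exact LinearMap.congr_fun hcart _

/-- The generic form of Statement 1, with the existence of good pairs as a hypothesis. -/
theorem main_generic (F : CohFunctor G P S A) (hF : F.IsCartesian) (hS1 : (1 : G) ∈ S)
    (K K' : Subgroup G) (hfin : K'.relIndex K ≠ 0)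
    (hPinf : ∀ U V : Subgroup G, P U → P V → P (U ⊓ V))
    (lemA : ∀ U W : Subgroup G, P U → K ≤ U → P W → K' ≤ W →
      ∃ V V' : Subgroup G, Good P K K' V V' ∧ V ≤ U ∧ V' ≤ W)
    (hex : ∃ U : Subgroup G, P U ∧ K ≤ U) :
    ∃! φ : F.Iw K →ₗ[A] F.Iw K',
      ∀ (V V' : Subgroup G) (hV : P V) (hV' : P V') (hKV : K ≤ V) (hK'V' : K' ≤ V'),
        V' ≤ V → V' ⊓ K = K' → V'.relIndex V = K'.relIndex K →
        ∀ f : F.Iw K,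
          (φ f).1 ⟨V', hV', hK'V'⟩ = F.pull 1 V' V (f.1 ⟨V, hV, hKV⟩) := by
  classical
  obtain ⟨U₀, hPU₀, hKU₀⟩ := hex
  have hS1' : (1 : G)⁻¹ ∈ S := by rw [inv_one]; exact hS1
  -- the family of chosen good pairs
  choose Vo Vo' hGd hVoU hVo'W using
    fun (W : Subgroup G) (h1 : P W) (h2 : K' ≤ W) => lemA U₀ W hPU₀ hKU₀ h1 h2
  -- composition of pushforwards along `1`
  have pushpush : ∀ (U V W : Subgroup G), P U → P V → P W → U ≤ V → V ≤ W →
      ∀ x, F.push 1 V W (F.push 1 U V x) = F.push 1 U W x := by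
    intro U V W hU hV hW hUV hVW x
    have c := F.push_comp 1 1 U V W hU hV hW hS1' hS1'
      (fun y hy => by simpa using hUV hy) (fun y hy => by simpa using hVW hy)
    rw [one_mul] at c
    exact LinearMap.congr_fun c x
  -- independence of the chosen pair
  have lemB : ∀ (f : F.Iw K) (W V₁ V₁' V₂ V₂' : Subgroup G) (hPW : P W)
      (h1 : Good P K K' V₁ V₁') (h2 : Good P K K' V₂ V₂')
      (h1W : V₁' ≤ W) (h2W : V₂' ≤ W),
      F.push 1 V₁' W (F.pull 1 V₁' V₁ (f.1 ⟨V₁, h1.hPV, h1.hKV⟩)) =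
        F.push 1 V₂' W (F.pull 1 V₂' V₂ (f.1 ⟨V₂, h2.hPV, h2.hKV⟩)) := by
    intro f W V₁ V₁' V₂ V₂' hPW h1 h2 h1W h2W
    obtain ⟨V₃, V₃', h3, h3U, h3W⟩ := lemA (V₁ ⊓ V₂) (V₁' ⊓ V₂')
      (hPinf _ _ h1.hPV h2.hPV) (le_inf h1.hKV h2.hKV)
      (hPinf _ _ h1.hPV' h2.hPV') (le_inf h1.hK'V' h2.hK'V')
    rw [lemC F hF hS1 K K' hfin V₁ V₁' V₃ V₃' h1 h3 (h3U.trans inf_le_left)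
        (h3W.trans inf_le_left) f,
      lemC F hF hS1 K K' hfin V₂ V₂' V₃ V₃' h2 h3 (h3U.trans inf_le_right)
        (h3W.trans inf_le_right) f]
    rw [pushpush V₃' V₁' W h3.hPV' h1.hPV' hPW (h3W.trans inf_le_left) h1W,
      pushpush V₃' V₂' W h3.hPV' h2.hPV' hPW (h3W.trans inf_le_right) h2W]
  -- the underlying family of the candidate map
  have hmem : ∀ f : F.Iw K,
      (fun W : {U : Subgroup G // P U ∧ K' ≤ U} =>
        F.push 1 (Vo' W.1 W.2.1 W.2.2) W.1
          (F.pull 1 (Vo' W.1 W.2.1 W.2.2) (Vo W.1 W.2.1 W.2.2)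
            (f.1 ⟨Vo W.1 W.2.1 W.2.2, (hGd W.1 W.2.1 W.2.2).hPV,
              (hGd W.1 W.2.1 W.2.2).hKV⟩))) ∈ F.Iw K' := by
    intro f W₁ W₂ hW
    rw [pushpush (Vo' W₁.1 W₁.2.1 W₁.2.2) W₁.1 W₂.1 (hGd W₁.1 W₁.2.1 W₁.2.2).hPV'
      W₁.2.1 W₂.2.1 (hVo'W W₁.1 W₁.2.1 W₁.2.2) hW]
    exact lemB f W₂.1 _ _ _ _ W₂.2.1 (hGd W₁.1 W₁.2.1 W₁.2.2) (hGd W₂.1 W₂.2.1 W₂.2.2)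
      ((hVo'W W₁.1 W₁.2.1 W₁.2.2).trans hW) (hVo'W W₂.1 W₂.2.1 W₂.2.2)
  refine ⟨⟨⟨fun f => ⟨_, hmem f⟩, ?_⟩, ?_⟩, ?_, ?_⟩
  · -- additivity
    intro f g
    apply Subtype.ext
    funext W
    show F.push 1 (Vo' W.1 W.2.1 W.2.2) W.1
        (F.pull 1 (Vo' W.1 W.2.1 W.2.2) (Vo W.1 W.2.1 W.2.2)
          ((f + g).1 ⟨Vo W.1 W.2.1 W.2.2, (hGd W.1 W.2.1 W.2.2).hPV, (hGd W.1 W.2.1 W.2.2).hKV⟩)) =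
      F.push 1 (Vo' W.1 W.2.1 W.2.2) W.1
        (F.pull 1 (Vo' W.1 W.2.1 W.2.2) (Vo W.1 W.2.1 W.2.2)
          ((f).1 ⟨Vo W.1 W.2.1 W.2.2, (hGd W.1 W.2.1 W.2.2).hPV, (hGd W.1 W.2.1 W.2.2).hKV⟩)) +
      F.push 1 (Vo' W.1 W.2.1 W.2.2) W.1
        (F.pull 1 (Vo' W.1 W.2.1 W.2.2) (Vo W.1 W.2.1 W.2.2)
          ((g).1 ⟨Vo W.1 W.2.1 W.2.2, (hGd W.1 W.2.1 W.2.2).hPV, (hGd W.1 W.2.1 W.2.2).hKV⟩))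
    have e : (f + g).1 ⟨Vo W.1 W.2.1 W.2.2, (hGd W.1 W.2.1 W.2.2).hPV, (hGd W.1 W.2.1 W.2.2).hKV⟩ = f.1 ⟨Vo W.1 W.2.1 W.2.2, (hGd W.1 W.2.1 W.2.2).hPV, (hGd W.1 W.2.1 W.2.2).hKV⟩ + g.1 ⟨Vo W.1 W.2.1 W.2.2, (hGd W.1 W.2.1 W.2.2).hPV, (hGd W.1 W.2.1 W.2.2).hKV⟩ := rfl
    rw [e, map_add, map_add]
  · -- smul
    intro c f
    apply Subtype.ext
    funext W
    show F.push 1 (Vo' W.1 W.2.1 W.2.2) W.1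
        (F.pull 1 (Vo' W.1 W.2.1 W.2.2) (Vo W.1 W.2.1 W.2.2)
          ((c • f).1 ⟨Vo W.1 W.2.1 W.2.2, (hGd W.1 W.2.1 W.2.2).hPV, (hGd W.1 W.2.1 W.2.2).hKV⟩)) =
      c • F.push 1 (Vo' W.1 W.2.1 W.2.2) W.1
        (F.pull 1 (Vo' W.1 W.2.1 W.2.2) (Vo W.1 W.2.1 W.2.2)
          ((f).1 ⟨Vo W.1 W.2.1 W.2.2, (hGd W.1 W.2.1 W.2.2).hPV, (hGd W.1 W.2.1 W.2.2).hKV⟩))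
    have e : (c • f).1 ⟨Vo W.1 W.2.1 W.2.2, (hGd W.1 W.2.1 W.2.2).hPV, (hGd W.1 W.2.1 W.2.2).hKV⟩ = c • f.1 ⟨Vo W.1 W.2.1 W.2.2, (hGd W.1 W.2.1 W.2.2).hPV, (hGd W.1 W.2.1 W.2.2).hKV⟩ := rfl
    rw [e, map_smul, map_smul]
  · -- the characterizing property
    intro V V' hV hV' hKV hK'V' hV'V hint hidx f
    have hGood : Good P K K' V V' := ⟨hV, hV', hKV, hK'V', hV'V, hint, hidx⟩
    have hB := lemB f V' (Vo V' hV' hK'V') (Vo' V' hV' hK'V') V V' hV'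
      (hGd V' hV' hK'V') hGood (hVo'W V' hV' hK'V') (le_refl V')
    have hid : F.push 1 V' V' (F.pull 1 V' V (f.1 ⟨V, hV, hKV⟩)) =
        F.pull 1 V' V (f.1 ⟨V, hV, hKV⟩) := by
      rw [F.push_id V' hV']; rfl
    exact hB.trans hid
  · -- uniqueness
    intro φ' hφ'
    apply LinearMap.ext
    intro f
    apply Subtype.ext
    funext W
    have h1 : F.push 1 (Vo' W.1 W.2.1 W.2.2) W.1
        ((φ' f).1 ⟨Vo' W.1 W.2.1 W.2.2, (hGd W.1 W.2.1 W.2.2).hPV',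
          (hGd W.1 W.2.1 W.2.2).hK'V'⟩) = (φ' f).1 W :=
      (φ' f).2 ⟨Vo' W.1 W.2.1 W.2.2, (hGd W.1 W.2.1 W.2.2).hPV',
        (hGd W.1 W.2.1 W.2.2).hK'V'⟩ W (hVo'W W.1 W.2.1 W.2.2)
    have h2 := hφ' (Vo W.1 W.2.1 W.2.2) (Vo' W.1 W.2.1 W.2.2)
      (hGd W.1 W.2.1 W.2.2).hPV (hGd W.1 W.2.1 W.2.2).hPV'
      (hGd W.1 W.2.1 W.2.2).hKV (hGd W.1 W.2.1 W.2.2).hK'V'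
      (hGd W.1 W.2.1 W.2.2).hV'V (hGd W.1 W.2.1 W.2.2).hinter
      (hGd W.1 W.2.1 W.2.2).hidx f
    rw [← h1, h2]
    rfl

end Alg

end Stmt1Aux
/-- Let `M` be a Cartesian cohomology functor for `(G, Σ)` (here `G` is a
locally profinite group and `Σ` an open submonoid), with coefficients in `A`.  Let
`K' ⊆ K` be compact subgroups of `G` with `[K : K']` finite, `K` contained in some open
compact subgroup contained in `Σ`.  Then there is a unique `A`-linear map
`pr^⋆ : M_Iw(K) → M_Iw(K')` such that for every pair of open compact subgroups
`V' ⊆ V ⊆ Σ` with `K ⊆ V`, `K' ⊆ V'`, `V' ∩ K = K'` and `[V : V'] = [K : K']`, the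
composite of `pr^⋆` with the projection `M_Iw(K') → M(V')` equals the composite of the
projection `M_Iw(K) → M(V)` with the pullback `pr^⋆_{V',V} : M(V) → M(V')`. -/
theorem stmt_1 {G : Type*} [Group G] [TopologicalSpace G] [IsTopologicalGroup G]
    [LocallyCompactSpace G] [T2Space G] [TotallyDisconnectedSpace G]
    {A : Type*} [CommRing A]
    (Sig : Submonoid G) (hSig : IsOpen (Sig : Set G))
    (F : CohFunctor G
      (fun U => IsOpen (U : Set G) ∧ IsCompact (U : Set G) ∧ (U : Set G) ⊆ (Sig : Set G))
      (Sig : Set G) A)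
    (hF : F.IsCartesian)
    (K K' : Subgroup G) (hKcpt : IsCompact (K : Set G)) (hK'cpt : IsCompact (K' : Set G))
    (hle : K' ≤ K) (hfin : K'.relIndex K ≠ 0)
    (hexists : ∃ U : Subgroup G,
      (IsOpen (U : Set G) ∧ IsCompact (U : Set G) ∧ (U : Set G) ⊆ (Sig : Set G)) ∧ K ≤ U) :
    ∃! φ : F.Iw K →ₗ[A] F.Iw K',
      ∀ (V V' : Subgroup G)
        (hV : IsOpen (V : Set G) ∧ IsCompact (V : Set G) ∧ (V : Set G) ⊆ (Sig : Set G))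
        (hV' : IsOpen (V' : Set G) ∧ IsCompact (V' : Set G) ∧ (V' : Set G) ⊆ (Sig : Set G))
        (hKV : K ≤ V) (hK'V' : K' ≤ V'),
        V' ≤ V → V' ⊓ K = K' → V'.relIndex V = K'.relIndex K →
        ∀ f : F.Iw K,
          (φ f).1 ⟨V', hV', hK'V'⟩ = F.pull 1 V' V (f.1 ⟨V, hV, hKV⟩) := by
  classical
  refine Stmt1Aux.main_generic F hF Sig.one_mem K K' hfin ?_ ?_ hexists
  · -- P is stable under intersections
    intro U V hU hV
    refine ⟨?_, ?_, ?_⟩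
    · rw [Subgroup.coe_inf]; exact hU.1.inter hV.1
    · rw [Subgroup.coe_inf]; exact hU.2.1.inter_right hV.2.1.isClosed
    · rw [Subgroup.coe_inf]; exact fun x hx => hU.2.2 hx.1
  · -- existence of good pairs (Lemma A)
    intro U W hPU hKU hPW hK'W
    obtain ⟨O, hOopen, hOK⟩ := Stmt1Aux.exists_open_inter K K' hK'cpt hle hfin
    have h1O : (1 : G) ∈ O := by
      have h : (1 : G) ∈ O ∩ (K : Set G) := by
        rw [hOK]; exact SetLike.mem_coe.mpr K'.one_mem
      exact h.1
    have hΩo : IsOpen (O ∩ ((U : Set G) ∩ (W : Set G))) :=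
      hOopen.inter (hPU.1.inter hPW.1)
    have h1Ω : (1 : G) ∈ O ∩ ((U : Set G) ∩ (W : Set G)) :=
      ⟨h1O, SetLike.mem_coe.mpr U.one_mem, SetLike.mem_coe.mpr W.one_mem⟩
    obtain ⟨N₀, hN₀o, hN₀c, hN₀U, hN₀Ω⟩ :=
      Stmt1Aux.exists_small_subgroup U hPU.1 hPU.2.1 hΩo h1Ω
    obtain ⟨N, hNo, hNc, hNN₀, hNstab⟩ :=
      Stmt1Aux.exists_conj_stable_subgroup K N₀ hKcpt hN₀o hN₀c
    have hNstab' : ∀ k ∈ K', conjSub k N = N := fun k hk => hNstab k (hle hk)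
    have hNU : N ≤ U := hNN₀.trans hN₀U
    have hNW : N ≤ W := fun n hn => (hN₀Ω (hNN₀ hn)).2.2
    have hNO : (N : Set G) ⊆ O := fun n hn => (hN₀Ω (hNN₀ hn)).1
    have hVU : Stmt1Aux.prodSub K N hNstab ≤ U := Stmt1Aux.prodSub_le hKU hNU
    have hV'W : Stmt1Aux.prodSub K' N hNstab' ≤ W := Stmt1Aux.prodSub_le hK'W hNW
    have hKV : K ≤ Stmt1Aux.prodSub K N hNstab := Stmt1Aux.left_le_prodSub
    have hK'V' : K' ≤ Stmt1Aux.prodSub K' N hNstab' := Stmt1Aux.left_le_prodSub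
    have hinter : Stmt1Aux.prodSub K' N hNstab' ⊓ K = K' := by
      apply le_antisymm
      · intro x hx
        obtain ⟨hx1, hx2⟩ := Subgroup.mem_inf.mp hx
        obtain ⟨k', hk', n, hn, heq⟩ := Stmt1Aux.mem_prodSub.mp hx1
        have hnK : n ∈ K := by
          have e : n = k'⁻¹ * x := by rw [← heq]; group
          rw [e]
          exact mul_mem (inv_mem (hle hk')) hx2
        have hnK' : n ∈ K' := by
          have h : n ∈ O ∩ (K : Set G) := ⟨hNO hn, SetLike.mem_coe.mpr hnK⟩
          rw [hOK] at h
          exact SetLike.mem_coe.mp h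
        rw [← heq]
        exact mul_mem hk' hnK'
      · exact le_inf Stmt1Aux.left_le_prodSub hle
    refine ⟨Stmt1Aux.prodSub K N hNstab, Stmt1Aux.prodSub K' N hNstab',
      ⟨⟨?_, ?_, ?_⟩, ⟨?_, ?_, ?_⟩, hKV, hK'V',
        Stmt1Aux.prodSub_le (hle.trans Stmt1Aux.left_le_prodSub) Stmt1Aux.right_le_prodSub,
        hinter, ?_⟩, hVU, hV'W⟩
    · rw [Stmt1Aux.coe_prodSub]; exact hNo.mul_left
    · rw [Stmt1Aux.coe_prodSub]; exact hKcpt.mul hNc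
    · exact fun x hx => hPU.2.2 (hVU hx)
    · rw [Stmt1Aux.coe_prodSub]; exact hNo.mul_left
    · rw [Stmt1Aux.coe_prodSub]; exact hK'cpt.mul hNc
    · exact fun x hx => hPW.2.2 (hV'W hx)
    · refine Stmt1Aux.good_relindex ?_ hKV hK'V' hinter
      intro v hv
      obtain ⟨k, hk, n, hn, heq⟩ := Stmt1Aux.mem_prodSub.mp hv
      exact ⟨k, hk, n, Stmt1Aux.right_le_prodSub hn, heq.symm⟩
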